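/- Let f be a Schwartz function on ℝ^n and let k, N ∈ ℕ. Then there is a constant C such that for all η, ξ ∈ ℝ^n, |f(η) − Σ_{|α| ≤ k} ∂^α f(ξ) (η−ξ)^α / α!| ≤ C |η − ξ|^{k+1} (1 + dist(0, [η,ξ]))^{−N}, where [η,ξ] denotes the line segment with endpoints η and ξ, and dist(0, [η,ξ]) its distance from the origin. -/

import Mathlib

open Real Set

noncomputable section

/-- The partial derivative of a complex-valued function on `ℝ^n` in the `i`-th
coordinate direction. -/
def pderivE {n : ℕ} (i : Fin n) (f : EuclideanSpace ℝ (Fin n) → ℂ) :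
    EuclideanSpace ℝ (Fin n) → ℂ :=
  fun x => fderiv ℝ f x (EuclideanSpace.single i 1)

/-- The multi-index partial derivative `∂^α f`. -/
def mderiv {n : ℕ} (α : Fin n → ℕ) (f : EuclideanSpace ℝ (Fin n) → ℂ) :
    EuclideanSpace ℝ (Fin n) → ℂ :=
  ((List.ofFn fun i : Fin n => (pderivE i)^[α i]).foldr (· ∘ ·) id) f

namespace Stmt14Aux

variable {n : ℕ}

local notation "E" => EuclideanSpace ℝ (Fin n)

def opOf (l : List (Fin n)) (g : E → ℂ) : E → ℂ := l.foldr (fun j h => pderivE j h) g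

@[simp] lemma opOf_nil (g : E → ℂ) : opOf ([] : List (Fin n)) g = g := rfl
@[simp] lemma opOf_cons (j : Fin n) (l : List (Fin n)) (g : E → ℂ) :
    opOf (j :: l) g = pderivE j (opOf l g) := rfl

def mlist (α : Fin n → ℕ) : List (Fin n) :=
  (List.ofFn fun i : Fin n => List.replicate (α i) i).flatten

def schwOp (l : List (Fin n)) (f : SchwartzMap E ℂ) : SchwartzMap E ℂ :=
  l.foldr (fun j h => LineDeriv.lineDerivOp (EuclideanSpace.single j (1:ℝ) : E) h) f

def Kc (N : ℕ) (g : SchwartzMap E ℂ) : ℝ :=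
  2 ^ N * (Finset.Iic (N, 0)).sup (fun m => SchwartzMap.seminorm ℝ m.1 m.2) g

/-- directional derivative -/
def dirD (v : E) (g : E → ℂ) : E → ℂ := fun x => fderiv ℝ g x v

lemma pderivE_eq_dirD (i : Fin n) (g : E → ℂ) :
    pderivE i g = dirD (EuclideanSpace.single i 1) g := rfl

lemma smooth_dirD {g : E → ℂ} (hg : ContDiff ℝ (⊤ : ℕ∞) g) (v : E) :
    ContDiff ℝ (⊤ : ℕ∞) (dirD v g) := by
  have h := (hg.fderiv_right (m := (⊤ : ℕ∞)) le_rfl)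
  exact h.clm_apply contDiff_const

lemma dirD_comm {g : E → ℂ} (hg : ContDiff ℝ (⊤ : ℕ∞) g) (v w : E) (x : E) :
    dirD v (dirD w g) x = dirD w (dirD v g) x := by
  have hdg : ∀ y, HasFDerivAt g (fderiv ℝ g y) y := fun y =>
    (hg.differentiable (by simp) y).hasFDerivAt
  have h2 : DifferentiableAt ℝ (fderiv ℝ g) x := by
    have := (hg.fderiv_right (m := (⊤ : ℕ∞)) le_rfl)
    exact (this.differentiable (by simp)) x
  have hx : HasFDerivAt (fderiv ℝ g) (fderiv ℝ (fderiv ℝ g) x) x := h2.hasFDerivAt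
  have sym := second_derivative_symmetric hdg hx
  have key : ∀ a b : E, dirD a (dirD b g) x = fderiv ℝ (fderiv ℝ g) x a b := by
    intro a b
    have happ : HasFDerivAt (fun y => fderiv ℝ g y b)
        ((ContinuousLinearMap.apply ℝ ℂ b).comp (fderiv ℝ (fderiv ℝ g) x)) x :=
      (ContinuousLinearMap.apply ℝ ℂ b).hasFDerivAt.comp x hx
    show fderiv ℝ (fun y => fderiv ℝ g y b) x a = _
    simpa using congrArg (fun L : E →L[ℝ] ℂ => L a) happ.fderiv
  rw [key, key, sym]


lemma smooth_pderivE {g : E → ℂ} (hg : ContDiff ℝ (⊤ : ℕ∞) g) (i : Fin n) :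
    ContDiff ℝ (⊤ : ℕ∞) (pderivE i g) := smooth_dirD hg _

/-- apply `pderivE` along a list of coordinates -/
lemma opOf_append (l₁ l₂ : List (Fin n)) (g : E → ℂ) :
    opOf (l₁ ++ l₂) g = opOf l₁ (opOf l₂ g) := by
  simp [opOf, List.foldr_append]

lemma smooth_opOf {g : E → ℂ} (hg : ContDiff ℝ (⊤ : ℕ∞) g) (l : List (Fin n)) :
    ContDiff ℝ (⊤ : ℕ∞) (opOf l g) := by
  induction l with
  | nil => simpa
  | cons j l ih => exact smooth_pderivE ih j

lemma opOf_replicate (i : Fin n) (m : ℕ) (g : E → ℂ) :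
    opOf (List.replicate m i) g = (pderivE i)^[m] g := by
  induction m with
  | zero => rfl
  | succ m ih => rw [List.replicate_succ, opOf_cons, ih, Function.iterate_succ_apply']

lemma opOf_perm {l₁ l₂ : List (Fin n)} (h : l₁.Perm l₂) {g : E → ℂ}
    (hg : ContDiff ℝ (⊤ : ℕ∞) g) : opOf l₁ g = opOf l₂ g := by
  induction h generalizing g with
  | nil => rfl
  | cons x _ ih => simp [opOf_cons, ih hg]
  | swap x y l =>
      simp only [opOf_cons]
      funext z
      rw [pderivE_eq_dirD, pderivE_eq_dirD, pderivE_eq_dirD (g := opOf l g)]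
      exact dirD_comm (smooth_opOf hg l) _ _ z
  | trans _ _ ih₁ ih₂ => rw [ih₁ hg, ih₂ hg]

/-- canonical list of a multi-index -/
lemma count_mlist (α : Fin n → ℕ) (j : Fin n) : (mlist α).count j = α j := by
  classical
  rw [mlist, List.count_flatten]
  rw [List.map_ofFn, List.sum_ofFn]
  simp only [Function.comp]
  rw [Finset.sum_eq_single j]
  · simp
  · intro b _ hb
    simp [List.count_replicate, hb]
  · simp

lemma mderiv_eq_opOf (α : Fin n → ℕ) (g : E → ℂ) : mderiv α g = opOf (mlist α) g := by
  have key : ∀ (ls : List (List (Fin n))) (g : E → ℂ),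
      ((ls.map fun l => opOf l).foldr (· ∘ ·) id) g = opOf ls.flatten g := by
    intro ls
    induction ls with
    | nil => intro g; rfl
    | cons l ls ih =>
        intro g
        simp only [List.map_cons, List.foldr_cons, List.flatten_cons, Function.comp_apply,
          opOf_append]
        rw [ih]
  have : (List.ofFn fun i : Fin n => (pderivE i)^[α i])
      = (List.ofFn fun i : Fin n => List.replicate (α i) i).map (fun l => opOf l) := by
    rw [List.map_ofFn]
    congr 1
    funext i
    simp only [Function.comp]
    funext g
    rw [opOf_replicate]
  rw [mderiv, this, key, mlist]


lemma mderiv_zero (g : E → ℂ) : mderiv (fun _ => 0 : Fin n → ℕ) g = g := by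
  rw [mderiv_eq_opOf]
  have : mlist (fun _ => 0 : Fin n → ℕ) = [] := by
    simp [mlist, List.flatten_eq_nil_iff]
  rw [this]; rfl

lemma mderiv_pderivE {g : E → ℂ} (hg : ContDiff ℝ (⊤ : ℕ∞) g) (α : Fin n → ℕ) (i : Fin n) :
    mderiv α (pderivE i g) = mderiv (α + Pi.single i 1) g := by
  classical
  rw [mderiv_eq_opOf, mderiv_eq_opOf]
  have hperm : (mlist (α + Pi.single i 1)).Perm (mlist α ++ [i]) := by
    rw [List.perm_iff_count]
    intro j
    rw [count_mlist, List.count_append, count_mlist]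
    by_cases h : j = i
    · subst h; simp
    · simp [Pi.single_apply, h, Ne.symm h, List.count_singleton]
  rw [opOf_perm hperm hg, opOf_append]
  rfl

lemma opOf_sum_smul {ι : Type*} (l : List (Fin n)) (s : Finset ι) (c : ι → ℂ)
    (h : ι → E → ℂ) (hh : ∀ i ∈ s, ContDiff ℝ (⊤ : ℕ∞) (h i)) (x : E) :
    opOf l (fun y => ∑ i ∈ s, c i • h i y) x = ∑ i ∈ s, c i • opOf l (h i) x := by
  induction l generalizing x with
  | nil => rfl
  | cons j l ih =>
      have hmem : ∀ i ∈ s, ContDiff ℝ (⊤ : ℕ∞) (opOf l (h i)) := fun i hi =>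
        smooth_opOf (hh i hi) l
      show pderivE j (opOf l fun y => ∑ i ∈ s, c i • h i y) x = _
      have hcong : (opOf l fun y => ∑ i ∈ s, c i • h i y)
          = fun y => ∑ i ∈ s, c i • opOf l (h i) y := by
        funext y; exact ih y
      rw [hcong]
      show fderiv ℝ (fun y => ∑ i ∈ s, c i • opOf l (h i) y) x (EuclideanSpace.single j 1) = _
      rw [fderiv_fun_sum (A := fun i y => c i • opOf l (h i) y) (fun i hi => ((hmem i hi).differentiable (by simp) x).const_smul (c i))]
      rw [ContinuousLinearMap.sum_apply]
      refine Finset.sum_congr rfl fun i hi => ?_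
      rw [fderiv_fun_const_smul ((hmem i hi).differentiable (by simp) x)]
      rfl

lemma basis_expand (v : E) : v = ∑ i : Fin n, v i • EuclideanSpace.single i 1 := by
  ext j
  classical
  rw [WithLp.ofLp_sum, Finset.sum_apply]
  simp [EuclideanSpace.single_apply]

lemma dirD_eq_sum {g : E → ℂ} (hg : ContDiff ℝ (⊤ : ℕ∞) g) (v : E) :
    dirD v g = fun y => ∑ i : Fin n, ((v i : ℂ)) • pderivE i g y := by
  funext y
  have hd : DifferentiableAt ℝ g y := hg.differentiable (by simp) y
  show fderiv ℝ g y v = _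
  conv_lhs => rw [basis_expand v]
  rw [map_sum]
  refine Finset.sum_congr rfl fun i _ => ?_
  rw [(fderiv ℝ g y).map_smul]
  simp [pderivE, Complex.real_smul]


lemma fact_add_single (α : Fin n → ℕ) (i : Fin n) :
    ∏ j, Nat.factorial ((α + Pi.single i 1 : Fin n → ℕ) j) = (α i + 1) * ∏ j, Nat.factorial (α j) := by
  classical
  rw [← Finset.mul_prod_erase Finset.univ _ (Finset.mem_univ i),
    ← Finset.mul_prod_erase Finset.univ (fun j => Nat.factorial (α j)) (Finset.mem_univ i)]
  have h1 : ∀ j ∈ Finset.univ.erase i,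
      Nat.factorial ((α + Pi.single i 1 : Fin n → ℕ) j) = Nat.factorial (α j) := by
    intro j hj
    have : j ≠ i := Finset.ne_of_mem_erase hj
    simp [Pi.single_apply, this]
  rw [Finset.prod_congr rfl h1]
  have : (α + Pi.single i 1 : Fin n → ℕ) i = α i + 1 := by simp
  rw [this, Nat.factorial_succ]
  ring

lemma vpow_add_single (v : E) (α : Fin n → ℕ) (i : Fin n) :
    ∏ j, ((v j : ℝ) : ℂ) ^ ((α + Pi.single i 1 : Fin n → ℕ) j)
      = (∏ j, ((v j : ℝ) : ℂ) ^ (α j)) * ((v i : ℝ) : ℂ) := by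
  classical
  rw [← Finset.mul_prod_erase Finset.univ _ (Finset.mem_univ i),
    ← Finset.mul_prod_erase Finset.univ (fun j => ((v j : ℝ) : ℂ) ^ (α j)) (Finset.mem_univ i)]
  have h1 : ∀ j ∈ Finset.univ.erase i,
      ((v j : ℝ) : ℂ) ^ ((α + Pi.single i 1 : Fin n → ℕ) j) = ((v j : ℝ) : ℂ) ^ (α j) := by
    intro j hj
    have : j ≠ i := Finset.ne_of_mem_erase hj
    simp [Pi.single_apply, this]
  rw [Finset.prod_congr rfl h1]
  have : (α + Pi.single i 1 : Fin n → ℕ) i = α i + 1 := by simp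
  rw [this, pow_succ]
  ring

lemma sum_add_single (α : Fin n → ℕ) (i : Fin n) :
    ∑ j, (α + Pi.single i 1 : Fin n → ℕ) j = (∑ j, α j) + 1 := by
  classical
  simp [Finset.sum_add_distrib, Finset.sum_pi_single']

/-- The multinomial formula for iterated directional derivatives. -/
lemma dirD_iterate (v : E) (m : ℕ) :
    ∀ (g : E → ℂ), ContDiff ℝ (⊤ : ℕ∞) g → ∀ (x : E),
    (dirD v)^[m] g x = ∑ α ∈ Finset.Nat.antidiagonalTuple n m,
      ((m.factorial : ℂ) / ((∏ i, Nat.factorial (α i) : ℕ) : ℂ))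
        * (∏ i, ((v i : ℝ) : ℂ) ^ (α i)) * mderiv α g x := by
  classical
  induction m with
  | zero =>
      intro g hg x
      rw [Finset.Nat.antidiagonalTuple_zero_right, Finset.sum_singleton]
      have h0 : mderiv (0 : Fin n → ℕ) g = g := mderiv_zero g
      simp [h0]
  | succ m ih =>
      intro g hg x
      rw [Function.iterate_succ_apply, ih (dirD v g) (smooth_dirD hg v) x]
      have hterm : ∀ α ∈ Finset.Nat.antidiagonalTuple n m,
          ((m.factorial : ℂ) / ((∏ i, Nat.factorial (α i) : ℕ) : ℂ))
            * (∏ i, ((v i : ℝ) : ℂ) ^ (α i)) * mderiv α (dirD v g) x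
          = ∑ i : Fin n,
            ((m.factorial : ℂ) / ((∏ i, Nat.factorial (α i) : ℕ) : ℂ))
              * (∏ i, ((v i : ℝ) : ℂ) ^ (α i))
              * ((v i : ℂ) * mderiv (α + Pi.single i 1) g x) := by
        intro α hα
        have : mderiv α (dirD v g) x = ∑ i : Fin n,
            (v i : ℂ) • mderiv (α + Pi.single i 1) g x := by
          rw [dirD_eq_sum hg v, mderiv_eq_opOf,
            opOf_sum_smul _ _ _ _ (fun i _ => smooth_pderivE hg i) x]
          refine Finset.sum_congr rfl fun i _ => ?_
          rw [← mderiv_eq_opOf, mderiv_pderivE hg]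
        rw [this, Finset.mul_sum]
        refine Finset.sum_congr rfl fun i _ => ?_
        rw [smul_eq_mul]
      rw [Finset.sum_congr rfl hterm]
      -- now a double sum; reindex
      rw [← Finset.sum_product']
      have hRHS : ∀ β ∈ Finset.Nat.antidiagonalTuple n (m+1),
          (((m+1).factorial : ℂ) / ((∏ i, Nat.factorial (β i) : ℕ) : ℂ))
            * (∏ i, ((v i : ℝ) : ℂ) ^ (β i)) * mderiv β g x
          = ∑ i : Fin n, ((β i : ℕ) : ℂ)
              * ((m.factorial : ℂ) / ((∏ j, Nat.factorial (β j) : ℕ) : ℂ))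
              * (∏ j, ((v j : ℝ) : ℂ) ^ (β j)) * mderiv β g x := by
        intro β hβ
        have hsum : (∑ i, β i) = m + 1 := Finset.Nat.mem_antidiagonalTuple.mp hβ
        have : (∑ i : Fin n, ((β i : ℕ) : ℂ)) = ((m+1 : ℕ) : ℂ) := by
          rw [← Nat.cast_sum, hsum]
        calc (((m+1).factorial : ℂ) / ((∏ i, Nat.factorial (β i) : ℕ) : ℂ))
              * (∏ i, ((v i : ℝ) : ℂ) ^ (β i)) * mderiv β g x
            = (∑ i : Fin n, ((β i : ℕ) : ℂ))
              * ((m.factorial : ℂ) / ((∏ j, Nat.factorial (β j) : ℕ) : ℂ))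
              * (∏ j, ((v j : ℝ) : ℂ) ^ (β j)) * mderiv β g x := by
              rw [this, Nat.factorial_succ, Nat.cast_mul]
              ring
          _ = _ := by
              rw [Finset.sum_mul, Finset.sum_mul, Finset.sum_mul]
      rw [Finset.sum_congr rfl hRHS, ← Finset.sum_product']
      -- bijection between (A m ×ˢ univ) and nonzero part of (A (m+1) ×ˢ univ)
      rw [← Finset.sum_filter_of_ne (s := Finset.Nat.antidiagonalTuple n (m+1) ×ˢ Finset.univ)
        (p := fun p => p.1 p.2 ≠ 0) (by
          intro p _ hf h0
          apply hf
          rw [h0]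
          simp)]
      refine Finset.sum_nbij' (fun p => (p.1 + Pi.single p.2 1, p.2))
        (fun q => (q.1 - Pi.single q.2 1, q.2)) ?_ ?_ ?_ ?_ ?_
      · rintro ⟨α, i⟩ hp
        simp only [Finset.mem_product, Finset.Nat.mem_antidiagonalTuple] at hp
        simp only [Finset.mem_filter, Finset.mem_product, Finset.Nat.mem_antidiagonalTuple]
        refine ⟨⟨?_, Finset.mem_univ _⟩, ?_⟩
        · rw [sum_add_single, hp.1]
        · simp
      · rintro ⟨β, i⟩ hq
        simp only [Finset.mem_filter, Finset.mem_product,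
          Finset.Nat.mem_antidiagonalTuple] at hq
        obtain ⟨⟨hsum, -⟩, hne⟩ := hq
        have hk : β - Pi.single i 1 + Pi.single i 1 = β := by
          funext j
          by_cases h : j = i
          · subst h
            simp only [Pi.add_apply, Pi.sub_apply, Pi.single_eq_same]
            omega
          · simp [Pi.single_apply, h]
        simp only [Finset.mem_product, Finset.Nat.mem_antidiagonalTuple]
        refine ⟨?_, Finset.mem_univ _⟩
        have := sum_add_single (β - Pi.single i 1) i
        rw [hk, hsum] at this
        omega
      · rintro ⟨α, i⟩ hp
        simp only [Prod.mk.injEq]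
        constructor
        · funext j
          by_cases h : j = i
          · subst h; simp
          · simp [Pi.single_apply, h]
        · trivial
      · rintro ⟨β, i⟩ hq
        simp only [Finset.mem_filter, Finset.mem_product,
          Finset.Nat.mem_antidiagonalTuple] at hq
        obtain ⟨⟨hsum, -⟩, hne⟩ := hq
        simp only [Prod.mk.injEq]
        constructor
        · funext j
          by_cases h : j = i
          · subst h
            simp only [Pi.add_apply, Pi.sub_apply, Pi.single_eq_same]
            omega
          · simp [Pi.single_apply, h]
        · trivial
      · rintro ⟨α, i⟩ hp
        simp only [Finset.mem_product, Finset.Nat.mem_antidiagonalTuple] at hp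
        -- term equality
        have hfact : ((∏ j, Nat.factorial ((α + Pi.single i 1 : Fin n → ℕ) j) : ℕ) : ℂ)
            = ((α i + 1 : ℕ) : ℂ) * ((∏ j, Nat.factorial (α j) : ℕ) : ℂ) := by
          rw [← Nat.cast_mul, fact_add_single]
        have hvpow := vpow_add_single v α i
        have hd1 : ((∏ j, Nat.factorial (α j) : ℕ) : ℂ) ≠ 0 :=
          Nat.cast_ne_zero.mpr (Finset.prod_ne_zero_iff.mpr fun j _ => Nat.factorial_ne_zero _)
        have hne : ((α i + 1 : ℕ) : ℂ) ≠ 0 := Nat.cast_ne_zero.mpr (Nat.succ_ne_zero _)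
        have hidx : (((α + Pi.single i 1 : Fin n → ℕ) i : ℕ) : ℂ) = ((α i + 1 : ℕ) : ℂ) := by simp
        rw [hfact, hvpow, hidx]
        field_simp


/-- Schwartz-map version of `opOf`. -/
lemma opOf_schw (l : List (Fin n)) (f : SchwartzMap E ℂ) :
    opOf l (fun z => f z) = fun z => schwOp l f z := by
  induction l with
  | nil => rfl
  | cons j l ih =>
      show pderivE j (opOf l fun z => f z) = _
      rw [ih]
      funext z
      show fderiv ℝ (fun z => schwOp l f z) z (EuclideanSpace.single j 1) = _
      exact (SchwartzMap.lineDerivOp_apply_eq_fderiv (EuclideanSpace.single j 1) (schwOp l f) z).symm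

lemma mderiv_schw (α : Fin n → ℕ) (f : SchwartzMap E ℂ) :
    mderiv α (fun z => f z) = fun z => schwOp (mlist α) f z := by
  rw [mderiv_eq_opOf, opOf_schw]

/-- decay constant for a Schwartz map -/
lemma Kc_nonneg (N : ℕ) (g : SchwartzMap E ℂ) : 0 ≤ Kc N g := by
  apply mul_nonneg (by positivity)
  have h0 : ((0, 0) : ℕ × ℕ) ∈ Finset.Iic ((N, 0) : ℕ × ℕ) := Finset.mem_Iic.mpr (by simp)
  calc (0:ℝ) ≤ SchwartzMap.seminorm ℝ 0 0 g := apply_nonneg _ _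
    _ ≤ _ := Seminorm.le_def.mp (Finset.le_sup (f := fun m : ℕ × ℕ => SchwartzMap.seminorm ℝ m.1 m.2) h0) g

lemma decay_bound (N : ℕ) (g : SchwartzMap E ℂ) (y : E) :
    (1 + ‖y‖) ^ N * ‖g y‖ ≤ Kc N g := by
  have := SchwartzMap.one_add_le_sup_seminorm_apply (𝕜 := ℝ) (m := (N, 0))
    le_rfl le_rfl g y
  rwa [norm_iteratedFDeriv_zero] at this

lemma coord_le_norm (v : E) (i : Fin n) : |v i| ≤ ‖v‖ := by
  have h := abs_real_inner_le_norm (EuclideanSpace.single i (1:ℝ)) v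
  rw [EuclideanSpace.norm_single] at h
  simpa [EuclideanSpace.inner_single_left] using h

lemma hasDerivAt_line {g : E → ℂ} (hg : ContDiff ℝ (⊤ : ℕ∞) g) (ξ v : E) (t : ℝ) :
    HasDerivAt (fun t : ℝ => g (ξ + t • v)) (dirD v g (ξ + t • v)) t := by
  have h1 : HasDerivAt (fun t : ℝ => ξ + t • v) v t := by
    simpa using ((hasDerivAt_id t).smul_const v).const_add ξ
  have h2 := (hg.differentiable (by simp) (ξ + t • v)).hasFDerivAt
  exact h2.comp_hasDerivAt t h1

lemma smooth_dirD_iter {g : E → ℂ} (hg : ContDiff ℝ (⊤ : ℕ∞) g) (v : E) (m : ℕ) :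
    ContDiff ℝ (⊤ : ℕ∞) ((dirD v)^[m] g) := by
  induction m with
  | zero => simpa
  | succ m ih => rw [Function.iterate_succ_apply']; exact smooth_dirD ih v

lemma itDW {g : E → ℂ} (hg : ContDiff ℝ (⊤ : ℕ∞) g) (ξ v : E) (m : ℕ) :
    ∀ y ∈ Icc (0:ℝ) 1,
      iteratedDerivWithin m (fun t : ℝ => g (ξ + t • v)) (Icc 0 1) y
        = (dirD v)^[m] g (ξ + y • v) := by
  induction m with
  | zero => intro y hy; simp
  | succ m ih =>
      intro y hy
      rw [iteratedDerivWithin_succ]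
      rw [derivWithin_congr (fun t ht => ih t ht) (ih y hy)]
      have hD := (hasDerivAt_line (smooth_dirD_iter hg v m) ξ v y).hasDerivWithinAt
        (s := Icc (0:ℝ) 1)
      rw [hD.derivWithin ((uniqueDiffOn_Icc one_pos) y hy)]
      rw [← Function.iterate_succ_apply' (dirD v)]


lemma sum_reindex (k : ℕ) (G : (Fin n → ℕ) → ℂ) :
    ∑ α ∈ Finset.univ.filter (fun α : Fin n → Fin (k + 1) => ∑ i, (α i : ℕ) ≤ k),
        G (fun i => (α i : ℕ))
      = ∑ m ∈ Finset.range (k+1), ∑ α ∈ Finset.Nat.antidiagonalTuple n m, G α := by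
  classical
  rw [Finset.sum_sigma']
  refine Finset.sum_nbij'
    (fun (α : Fin n → Fin (k+1)) =>
      (⟨∑ i, (α i : ℕ), fun i => (α i : ℕ)⟩ : Σ _ : ℕ, Fin n → ℕ))
    (fun p (i : Fin n) => if h : p.2 i < k + 1 then (⟨p.2 i, h⟩ : Fin (k+1)) else 0)
    ?_ ?_ ?_ ?_ ?_
  · intro α hα
    simp only [Finset.mem_filter, Finset.mem_univ, true_and] at hα
    simp only [Finset.mem_sigma, Finset.mem_range, Finset.Nat.mem_antidiagonalTuple]
    exact ⟨Nat.lt_succ_of_le hα, trivial⟩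
  · intro p hp
    simp only [Finset.mem_sigma, Finset.mem_range, Finset.Nat.mem_antidiagonalTuple] at hp
    obtain ⟨hm, hsum⟩ := hp
    simp only [Finset.mem_filter, Finset.mem_univ, true_and]
    have hbd : ∀ i, p.2 i < k + 1 := fun i =>
      lt_of_le_of_lt (hsum ▸ Finset.single_le_sum (fun j _ => Nat.zero_le _) (Finset.mem_univ i)) hm
    have hsum2 : ∑ i, Fin.val (if h : p.2 i < k + 1 then (⟨p.2 i, h⟩ : Fin (k+1)) else 0)
        = ∑ i, p.2 i :=
      Finset.sum_congr rfl fun i _ => by rw [dif_pos (hbd i)]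
    rw [hsum2]
    omega
  · intro α hα
    funext i
    have : ((α i : ℕ)) < k + 1 := (α i).isLt
    simp [dif_pos this]
    exact fun h => absurd h (by omega)
  · intro p hp
    simp only [Finset.mem_sigma, Finset.mem_range, Finset.Nat.mem_antidiagonalTuple] at hp
    obtain ⟨hm, hsum⟩ := hp
    have hbd : ∀ i, p.2 i < k + 1 := fun i =>
      lt_of_le_of_lt (hsum ▸ Finset.single_le_sum (fun j _ => Nat.zero_le _) (Finset.mem_univ i)) hm
    have h2 : (fun i : Fin n =>
        Fin.val (if h : p.2 i < k + 1 then (⟨p.2 i, h⟩ : Fin (k+1)) else 0)) = p.2 := by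
      funext i; rw [dif_pos (hbd i)]
    have hsum2 : ∑ i, Fin.val (if h : p.2 i < k + 1 then (⟨p.2 i, h⟩ : Fin (k+1)) else 0)
        = ∑ i, p.2 i :=
      Finset.sum_congr rfl fun i _ => by rw [dif_pos (hbd i)]
    refine Sigma.ext ?_ (heq_of_eq ?_)
    · exact hsum2.trans hsum
    · exact h2
  · intro α hα
    rfl


set_option maxHeartbeats 1000000 in
theorem stmt14' (f : SchwartzMap E ℂ) (k N : ℕ) :
    ∃ C : ℝ, ∀ η ξ : EuclideanSpace ℝ (Fin n),
      ‖f η - ∑ α ∈ Finset.univ.filter (fun α : Fin n → Fin (k + 1) => ∑ i, (α i : ℕ) ≤ k),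
          mderiv (fun i => (α i : ℕ)) (fun z => f z) ξ *
            (∏ i, ((η i - ξ i : ℝ) : ℂ) ^ (α i : ℕ)) /
            (((∏ i, Nat.factorial (α i) : ℕ)) : ℂ)‖ *
        (1 + Metric.infDist 0 (segment ℝ η ξ)) ^ N
      ≤ C * ‖η - ξ‖ ^ (k + 1) := by
  classical
  set A := Finset.Nat.antidiagonalTuple n (k+1) with hA
  set B : ℝ := ∑ α ∈ A, ((k+1).factorial : ℝ) / ((∏ i, Nat.factorial (α i) : ℕ) : ℝ)
      * Kc N (schwOp (mlist α) f) with hBdef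
  refine ⟨B / (k.factorial : ℝ), ?_⟩
  intro η ξ
  set v : EuclideanSpace ℝ (Fin n) := η - ξ with hv
  set D := Metric.infDist 0 (segment ℝ η ξ) with hD
  have hD0 : 0 ≤ D := Metric.infDist_nonneg
  have h1D : (0:ℝ) < 1 + D := by linarith
  have hsmooth : ContDiff ℝ (⊤ : ℕ∞) (fun z => f z) := f.smooth ⊤
  set T : ℝ → ℂ := fun t => f (ξ + t • v) with hTdef
  have hline : ContDiff ℝ (⊤:ℕ∞) (fun t : ℝ => ξ + t • v) :=
    contDiff_const.add (contDiff_id.smul contDiff_const)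
  have hTs : ContDiff ℝ (⊤:ℕ∞) T := hsmooth.comp hline
  have hseg : ∀ t ∈ Icc (0:ℝ) 1, ξ + t • v ∈ segment ℝ η ξ := by
    intro t ht
    exact ⟨t, 1 - t, ht.1, by linarith [ht.2], by ring, by module⟩
  have hDle : ∀ t ∈ Icc (0:ℝ) 1, 1 + D ≤ 1 + ‖ξ + t • v‖ := by
    intro t ht
    have h := Metric.infDist_le_dist_of_mem (x := (0 : EuclideanSpace ℝ (Fin n))) (hseg t ht)
    rw [dist_zero_left] at h
    linarith
  have hC : ∀ y ∈ Icc (0:ℝ) 1, ‖iteratedDerivWithin (k+1) T (Icc 0 1) y‖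
      ≤ B * ‖v‖^(k+1) / (1+D)^N := by
    intro y hy
    rw [show iteratedDerivWithin (k+1) T (Icc 0 1) y
        = iteratedDerivWithin (k+1) (fun t : ℝ => (fun z => f z) (ξ + t • v)) (Icc 0 1) y from rfl,
      itDW hsmooth ξ v (k+1) y hy, dirD_iterate v (k+1) _ hsmooth _]
    refine (norm_sum_le _ _).trans ?_
    have hterm : ∀ α ∈ A,
        ‖((k+1).factorial : ℂ) / ((∏ i, Nat.factorial (α i) : ℕ) : ℂ)
            * (∏ i, ((v i : ℝ):ℂ) ^ α i) * mderiv α (fun z => f z) (ξ + y • v)‖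
        ≤ (((k+1).factorial : ℝ) / ((∏ i, Nat.factorial (α i) : ℕ) : ℝ)
            * Kc N (schwOp (mlist α) f)) * (‖v‖^(k+1) / (1+D)^N) := by
      intro α hα
      have hαs : ∑ i, α i = k + 1 := Finset.Nat.mem_antidiagonalTuple.mp hα
      rw [norm_mul, norm_mul]
      have h1 : ‖((k+1).factorial : ℂ) / ((∏ i, Nat.factorial (α i) : ℕ) : ℂ)‖
          = ((k+1).factorial : ℝ) / ((∏ i, Nat.factorial (α i) : ℕ) : ℝ) := by
        rw [norm_div]
        norm_num
      have h1nn : (0:ℝ) ≤ ((k+1).factorial : ℝ) / ((∏ i, Nat.factorial (α i) : ℕ) : ℝ) := by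
        positivity
      have h2 : ‖∏ i, ((v i : ℝ):ℂ) ^ α i‖ ≤ ‖v‖^(k+1) := by
        rw [norm_prod]
        calc ∏ i, ‖((v i : ℝ):ℂ) ^ α i‖ ≤ ∏ i, ‖v‖ ^ α i := by
              apply Finset.prod_le_prod (fun i _ => norm_nonneg _)
              intro i _
              rw [norm_pow, Complex.norm_real, Real.norm_eq_abs]
              exact pow_le_pow_left₀ (abs_nonneg _) (coord_le_norm v i) _
          _ = ‖v‖ ^ (k+1) := by rw [Finset.prod_pow_eq_pow_sum, hαs]
      have h3 : ‖mderiv α (fun z => f z) (ξ + y • v)‖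
          ≤ Kc N (schwOp (mlist α) f) / (1+D)^N := by
        rw [mderiv_schw]
        have hd := decay_bound N (schwOp (mlist α) f) (ξ + y • v)
        have hmono : (1+D)^N ≤ (1+‖ξ + y • v‖)^N :=
          pow_le_pow_left₀ h1D.le (hDle y hy) N
        rw [le_div_iff₀ (pow_pos h1D N)]
        calc ‖schwOp (mlist α) f (ξ + y • v)‖ * (1+D)^N
            ≤ ‖schwOp (mlist α) f (ξ + y • v)‖ * (1+‖ξ + y • v‖)^N :=
              mul_le_mul_of_nonneg_left hmono (norm_nonneg _)
          _ = (1+‖ξ + y • v‖)^N * ‖schwOp (mlist α) f (ξ + y • v)‖ := mul_comm _ _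
          _ ≤ Kc N _ := hd
      calc ‖((k+1).factorial : ℂ) / ((∏ i, Nat.factorial (α i) : ℕ) : ℂ)‖
            * ‖∏ i, ((v i : ℝ):ℂ) ^ α i‖ * ‖mderiv α (fun z => f z) (ξ + y • v)‖
          ≤ (((k+1).factorial : ℝ) / ((∏ i, Nat.factorial (α i) : ℕ) : ℝ))
            * ‖v‖^(k+1) * (Kc N (schwOp (mlist α) f) / (1+D)^N) := by
            rw [h1]
            refine mul_le_mul ?_ h3 (norm_nonneg _) (by positivity)
            exact mul_le_mul_of_nonneg_left h2 h1nn
        _ = (((k+1).factorial : ℝ) / ((∏ i, Nat.factorial (α i) : ℕ) : ℝ)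
            * Kc N (schwOp (mlist α) f)) * (‖v‖^(k+1) / (1+D)^N) := by ring
    refine (Finset.sum_le_sum hterm).trans ?_
    rw [← Finset.sum_mul, ← hBdef]
    rw [mul_div_assoc]
  have h1mem : (1:ℝ) ∈ Icc (0:ℝ) 1 := right_mem_Icc.mpr zero_le_one
  have h0mem : (0:ℝ) ∈ Icc (0:ℝ) 1 := left_mem_Icc.mpr zero_le_one
  have hcd : ContDiffOn ℝ (k+1 : ℕ) T (Icc (0:ℝ) 1) :=
    (hTs.of_le (mod_cast le_top)).contDiffOn
  have htay := taylor_mean_remainder_bound zero_le_one hcd h1mem hC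
  have hT1 : T 1 = f η := by
    show f (ξ + (1:ℝ) • v) = f η
    congr 1
    rw [hv]
    module
  have htp : taylorWithinEval T k (Icc (0:ℝ) 1) 0 1
      = ∑ m ∈ Finset.range (k+1), ∑ α ∈ Finset.Nat.antidiagonalTuple n m,
          mderiv α (fun z => f z) ξ * (∏ i, ((v i : ℝ):ℂ) ^ α i)
            / ((∏ i, Nat.factorial (α i) : ℕ) : ℂ) := by
    rw [taylor_within_apply]
    refine Finset.sum_congr rfl fun m hm => ?_
    rw [show iteratedDerivWithin m T (Icc 0 1) 0
        = iteratedDerivWithin m (fun t : ℝ => (fun z => f z) (ξ + t • v)) (Icc 0 1) 0 from rfl,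
      itDW hsmooth ξ v m 0 h0mem]
    have hz : ξ + (0:ℝ) • v = ξ := by module
    rw [hz, dirD_iterate v m _ hsmooth ξ, Finset.smul_sum]
    refine Finset.sum_congr rfl fun α hα => ?_
    have hm0 : ((m.factorial : ℂ)) ≠ 0 := Nat.cast_ne_zero.mpr (Nat.factorial_ne_zero m)
    have hP0 : ((∏ i, Nat.factorial (α i) : ℕ) : ℂ) ≠ 0 :=
      Nat.cast_ne_zero.mpr (Finset.prod_ne_zero_iff.mpr fun j _ => Nat.factorial_ne_zero _)
    have hP0' : (∏ i, ((α i).factorial : ℂ)) ≠ 0 :=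
      Finset.prod_ne_zero_iff.mpr fun j _ => Nat.cast_ne_zero.mpr (Nat.factorial_ne_zero _)
    rw [Complex.real_smul]
    push_cast
    rw [eq_div_iff hP0']
    field_simp
    ring
  have hre : (∑ α ∈ Finset.univ.filter (fun α : Fin n → Fin (k + 1) => ∑ i, (α i : ℕ) ≤ k),
          mderiv (fun i => (α i : ℕ)) (fun z => f z) ξ *
            (∏ i, ((η i - ξ i : ℝ) : ℂ) ^ (α i : ℕ)) /
            (((∏ i, Nat.factorial (α i) : ℕ)) : ℂ))
      = ∑ m ∈ Finset.range (k+1), ∑ α ∈ Finset.Nat.antidiagonalTuple n m,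
          mderiv α (fun z => f z) ξ * (∏ i, ((v i : ℝ):ℂ) ^ α i)
            / ((∏ i, Nat.factorial (α i) : ℕ) : ℂ) :=
    sum_reindex k (fun β => mderiv β (fun z => f z) ξ * (∏ i, ((v i : ℝ):ℂ) ^ β i)
      / ((∏ i, Nat.factorial (β i) : ℕ) : ℂ))
  rw [hre, ← htp, ← hT1]
  have hfin : B * ‖v‖ ^ (k + 1) / (1 + D) ^ N * (1 - 0) ^ (k + 1) / (k.factorial : ℝ)
      * (1 + D) ^ N = B / (k.factorial : ℝ) * ‖v‖ ^ (k + 1) := by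
    have hP : ((1:ℝ) + D) ^ N ≠ 0 := (pow_pos h1D N).ne'
    field_simp
    ring
  calc ‖T 1 - taylorWithinEval T k (Icc (0:ℝ) 1) 0 1‖ * (1 + D) ^ N
      ≤ B * ‖v‖ ^ (k + 1) / (1 + D) ^ N * (1 - 0) ^ (k + 1) / (k.factorial : ℝ)
        * (1 + D) ^ N := by
        exact mul_le_mul_of_nonneg_right htay (pow_nonneg h1D.le N)
    _ = B / (k.factorial : ℝ) * ‖v‖ ^ (k + 1) := hfin

end Stmt14Aux

theorem stmt14 {n : ℕ} (f : SchwartzMap (EuclideanSpace ℝ (Fin n)) ℂ) (k N : ℕ) :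
    ∃ C : ℝ, ∀ η ξ : EuclideanSpace ℝ (Fin n),
      ‖f η - ∑ α ∈ Finset.univ.filter (fun α : Fin n → Fin (k + 1) => ∑ i, (α i : ℕ) ≤ k),
          mderiv (fun i => (α i : ℕ)) (fun z => f z) ξ *
            (∏ i, ((η i - ξ i : ℝ) : ℂ) ^ (α i : ℕ)) /
            (((∏ i, Nat.factorial (α i) : ℕ)) : ℂ)‖ *
        (1 + Metric.infDist 0 (segment ℝ η ξ)) ^ N
      ≤ C * ‖η - ξ‖ ^ (k + 1) := by
  exact Stmt14Aux.stmt14' f k N
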